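/- Discrete version of the threshold characterization: let w₁,…,w_N ∈ [0,1] with Σᵢwᵢ > 0 and D(y) = 2Σᵢyᵢwᵢ/(Σᵢyᵢ + Σᵢwᵢ) for y ∈ {0,1}^N. Then there exists a maximizer of D of the form y* where y*ᵢ = 1 iff wᵢ ≥ t for the threshold t = D*/2, where D* = max_y D(y). In particular some maximizer of D is a threshold segmentation of w. -/
import Mathlib


open Filter

noncomputable section

/-- Discrete soft-Dice loss `SD(x) = 1 - 2⟨x,w⟩/(‖x‖₁ + ‖w‖₁)`. -/
def SDd {N : ℕ} (w x : Fin N → ℝ) : ℝ :=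
  1 - 2 * (∑ i, x i * w i) / ((∑ i, x i) + (∑ i, w i))

/-- Discrete Dice score `D(y) = 2⟨y,w⟩/(‖y‖₁ + ‖w‖₁)`. -/
def Dd {N : ℕ} (w y : Fin N → ℝ) : ℝ :=
  2 * (∑ i, y i * w i) / ((∑ i, y i) + (∑ i, w i))

/-- The set of soft-Dice values over `[0,1]^N`. -/
def SDdvals {N : ℕ} (w : Fin N → ℝ) : Set ℝ :=
  {v : ℝ | ∃ x : Fin N → ℝ, (∀ i, x i ∈ Set.Icc (0:ℝ) 1) ∧ v = SDd w x}

/-- The set of Dice values over `{0,1}^N`. -/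
def Ddvals {N : ℕ} (w : Fin N → ℝ) : Set ℝ :=
  {v : ℝ | ∃ y : Fin N → ℝ, (∀ i, y i = 0 ∨ y i = 1) ∧ v = Dd w y}

theorem discrete_dice_threshold_maximizer
    {N : ℕ} (hN : 1 ≤ N) (w : Fin N → ℝ)
    (hw : ∀ i, w i ∈ Set.Icc (0:ℝ) 1) (hpos : 0 < ∑ i, w i)
    (Dstar : ℝ) (hD : Dstar = sSup (Ddvals w)) :
    Dd w (fun i => if Dstar / 2 ≤ w i then (1:ℝ) else 0) = Dstar := by
  have hfin : (Ddvals w).Finite := by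
    have h1 : Ddvals w ⊆ Dd w '' (Set.pi Set.univ (fun _ : Fin N => ({0,1} : Set ℝ))) := by
      rintro v ⟨y, hy, rfl⟩
      exact ⟨y, fun i _ => by rcases hy i with h|h <;> simp [h], rfl⟩
    exact ((Set.Finite.pi (fun i => Set.Finite.insert _ (Set.finite_singleton _))).image _).subset h1
  have hne : (Ddvals w).Nonempty := ⟨Dd w (fun _ => 1), fun _ => 1, fun i => Or.inr rfl, rfl⟩
  have hmem : Dstar ∈ Ddvals w := hD ▸ hne.csSup_mem hfin
  have hub : ∀ v ∈ Ddvals w, v ≤ Dstar := fun v hv => hD ▸ le_csSup hfin.bddAbove hv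
  obtain ⟨y, hy, hyD⟩ := hmem
  set t : Fin N → ℝ := fun i => if Dstar / 2 ≤ w i then (1:ℝ) else 0 with ht
  have htmem : Dd w t ∈ Ddvals w := by
    refine ⟨t, fun i => ?_, rfl⟩
    by_cases h : Dstar/2 ≤ w i <;> simp [ht, h]
  have hle : Dd w t ≤ Dstar := hub _ htmem
  have hy0 : ∀ i, 0 ≤ y i := fun i => by rcases hy i with h|h <;> simp [h]
  have hy1 : ∀ i, y i ≤ 1 := fun i => by rcases hy i with h|h <;> simp [h]
  have hSy : 0 ≤ ∑ i, y i := Finset.sum_nonneg fun i _ => hy0 i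
  have hSt : 0 ≤ ∑ i, t i := Finset.sum_nonneg fun i _ => by
    by_cases h : Dstar/2 ≤ w i <;> simp [ht, h]
  have hdy : 0 < (∑ i, y i) + ∑ i, w i := by linarith
  have hdt : 0 < (∑ i, t i) + ∑ i, w i := by linarith
  have key : 2 * (∑ i, y i * w i) = Dstar * ((∑ i, y i) + ∑ i, w i) := by
    have h := hyD
    unfold Dd at h
    rw [eq_div_iff hdy.ne'] at h
    linarith
  have hterm : ∀ i, y i * (2 * w i - Dstar) ≤ t i * (2 * w i - Dstar) := by
    intro i
    by_cases h : Dstar/2 ≤ w i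
    · have h0 : 0 ≤ 2 * w i - Dstar := by linarith
      simp only [ht, if_pos h, one_mul]
      nlinarith [hy1 i, hy0 i]
    · have h0 : 2 * w i - Dstar < 0 := by linarith [not_le.mp h]
      simp only [ht, if_neg h, zero_mul]
      nlinarith [hy0 i]
  have hsum : ∑ i, y i * (2 * w i - Dstar) ≤ ∑ i, t i * (2 * w i - Dstar) :=
    Finset.sum_le_sum fun i _ => hterm i
  have expand : ∀ z : Fin N → ℝ, ∑ i, z i * (2 * w i - Dstar)
      = 2 * (∑ i, z i * w i) - Dstar * ∑ i, z i := by
    intro z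
    rw [Finset.mul_sum, Finset.mul_sum, ← Finset.sum_sub_distrib]
    exact Finset.sum_congr rfl fun i _ => by ring
  have hget : Dstar ≤ Dd w t := by
    have h2 : Dstar * ∑ i, w i ≤ 2 * (∑ i, t i * w i) - Dstar * ∑ i, t i := by
      have := hsum
      rw [expand, expand] at this
      linarith
    unfold Dd
    rw [le_div_iff₀ hdt]
    linarith
  linarith
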